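/- Let 𝒜 be an abelian category and 𝒯 a full subcategory. The following are equivalent: (1) 𝒯 is a hereditary torsion class that is preenveloping (equivalently, semi-special preenveloping); (2) 𝒯 is a TTF class, i.e. simultaneously a torsion class and a torsion-free class; (3) 𝒯 is a cohereditary torsion-free class that is precovering (equivalently, semi-special precovering). -/

import Mathlib

/-!
Common definitions for formalizing results of "Tilting preenvelopes and cotilting
precovers in general Abelian categories" (Parra–Saorín–Virili).

Conventions:
* Full subcategories of an abelian category `C` are encoded as `Set C`.
* "Sets" (index sets of families, coproducts, …) are encoded as types in the universe `v`
  of the morphisms of `C`.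
* `Ext¹(X,Y) = 0` is encoded via the splitting of all short exact sequences
  `0 → Y → E → X → 0` (equivalently, the vanishing of the Yoneda Ext group).
* Relative (`…In B`) notions encode the corresponding notion computed inside the
  full (abelian exact) subcategory determined by `B : Set C`; the ambient case is
  `B = Set.univ`.
* Coproducts are not assumed to exist: a coproduct of a family existing in the
  (sub)category is encoded by a cocone with the universal property (`IsCoproductIn`).
-/

open CategoryTheory CategoryTheory.Limits

universe w v u

attribute [local instance] CategoryTheory.Abelian.hasFiniteBiproducts

namespace Paper

variable {C : Type u} [Category.{v} C] [Abelian C]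

/-- `(i, p)` is a short exact sequence `0 ⟶ A ⟶ E ⟶ B ⟶ 0` in `C`. -/
def IsShortExact {A E B : C} (i : A ⟶ E) (p : E ⟶ B) : Prop :=
  ∃ hw : i ≫ p = 0, (ShortComplex.mk i p hw).ShortExact

/-- `Q`, together with the injections `ι`, is the coproduct of the family `f`
inside the full subcategory determined by `B`. -/
structure IsCoproductIn (B : Set C) {I : Type v} (f : I → C) (Q : C)
    (ι : ∀ i, f i ⟶ Q) : Prop where
  mem : ∀ i, f i ∈ B
  memQ : Q ∈ B
  desc : ∀ Z ∈ B, ∀ g : (∀ i, f i ⟶ Z), ∃! h : Q ⟶ Z, ∀ i, ι i ≫ h = g i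

/-- `Ext¹(X, Y) = 0`, computed in the full subcategory determined by `B`:
every short exact sequence `0 → Y → E → X → 0` with `E ∈ B` splits. -/
def Ext1ZeroIn (B : Set C) (X Y : C) : Prop :=
  ∀ E ∈ B, ∀ (i : Y ⟶ E) (p : E ⟶ X), IsShortExact i p → ∃ r : E ⟶ Y, i ≫ r = 𝟙 Y

/-- `Ext¹(X, Y) = 0` in the ambient abelian category. -/
def Ext1Zero (X Y : C) : Prop := Ext1ZeroIn Set.univ X Y

/-- `V^{⊥₁}`, computed in (the full subcategory determined by) `B`. -/
def rightPerp (B : Set C) (V : C) : Set C := {A ∈ B | Ext1ZeroIn B V A}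

/-- `^{⊥₁}T`, computed in `B`. -/
def leftPerpSet (B T : Set C) : Set C := {A ∈ B | ∀ X ∈ T, Ext1ZeroIn B A X}

/-- `T^{⊥₁}`, computed in `B`. -/
def rightPerpSet (B T : Set C) : Set C := {A ∈ B | ∀ X ∈ T, Ext1ZeroIn B X A}

/-- `Sub(X)` relative to `B`: objects of `B` admitting a monomorphism into an object of `X`. -/
def subIn (B X : Set C) : Set C := {A ∈ B | ∃ T ∈ X, ∃ f : A ⟶ T, Mono f}

/-- `Quot(X)` relative to `B`: objects of `B` which are epimorphic images of objects of `X`. -/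
def quotIn (B X : Set C) : Set C := {A ∈ B | ∃ T ∈ X, ∃ f : T ⟶ A, Epi f}

/-- `(T, F)` is a torsion pair in (the full subcategory determined by) `B`. -/
structure IsTorsionPairIn (B T F : Set C) : Prop where
  eqF : F = {A ∈ B | ∀ X ∈ T, ∀ f : X ⟶ A, f = 0}
  eqT : T = {A ∈ B | ∀ Y ∈ F, ∀ f : A ⟶ Y, f = 0}
  seq : ∀ A ∈ B, ∃ (X Y : C) (i : X ⟶ A) (p : A ⟶ Y), X ∈ T ∧ Y ∈ F ∧ IsShortExact i p

/-- `T` is a torsion class in `B`. -/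
def IsTorsionClassIn (B T : Set C) : Prop := ∃ F, IsTorsionPairIn B T F

/-- `F` is a torsion-free class in `B`. -/
def IsTorsionFreeClassIn (B F : Set C) : Prop := ∃ T, IsTorsionPairIn B T F

/-- `φ : M ⟶ X` is a `T`-preenvelope. -/
structure IsPreenvelope (T : Set C) {M X : C} (φ : M ⟶ X) : Prop where
  mem : X ∈ T
  fac : ∀ T' ∈ T, ∀ g : M ⟶ T', ∃ h : X ⟶ T', φ ≫ h = g

/-- `φ` is a semi-special `T`-preenvelope (relative to `B`):
a `T`-preenvelope whose cokernel lies in `^{⊥₁}T` (computed in `B`). -/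
def IsSemiSpecialPreenvelopeIn (B T : Set C) {M X : C} (φ : M ⟶ X) : Prop :=
  IsPreenvelope T φ ∧ cokernel φ ∈ leftPerpSet B T

/-- `φ` is a special `T`-preenvelope (relative to `B`). -/
def IsSpecialPreenvelopeIn (B T : Set C) {M X : C} (φ : M ⟶ X) : Prop :=
  Mono φ ∧ IsSemiSpecialPreenvelopeIn B T φ

/-- `T` is preenveloping in `B`. -/
def PreenvelopingIn (B T : Set C) : Prop :=
  ∀ M ∈ B, ∃ (X : C) (φ : M ⟶ X), IsPreenvelope T φ

/-- `T` is semi-special preenveloping in `B`. -/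
def SemiSpecialPreenvelopingIn (B T : Set C) : Prop :=
  ∀ M ∈ B, ∃ (X : C) (φ : M ⟶ X), IsSemiSpecialPreenvelopeIn B T φ

/-- `T` is special preenveloping in `B`. -/
def SpecialPreenvelopingIn (B T : Set C) : Prop :=
  ∀ M ∈ B, ∃ (X : C) (φ : M ⟶ X), IsSpecialPreenvelopeIn B T φ

/-- `φ : X ⟶ M` is a `T`-precover. -/
structure IsPrecover (T : Set C) {X M : C} (φ : X ⟶ M) : Prop where
  mem : X ∈ T
  fac : ∀ T' ∈ T, ∀ g : T' ⟶ M, ∃ h : T' ⟶ X, h ≫ φ = g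

/-- `φ` is a semi-special `T`-precover (relative to `B`):
a `T`-precover whose kernel lies in `T^{⊥₁}` (computed in `B`). -/
def IsSemiSpecialPrecoverIn (B T : Set C) {X M : C} (φ : X ⟶ M) : Prop :=
  IsPrecover T φ ∧ kernel φ ∈ rightPerpSet B T

/-- `T` is precovering in `B`. -/
def PrecoveringIn (B T : Set C) : Prop :=
  ∀ M ∈ B, ∃ (X : C) (φ : X ⟶ M), IsPrecover T φ

/-- `T` is semi-special precovering in `B`. -/
def SemiSpecialPrecoveringIn (B T : Set C) : Prop :=
  ∀ M ∈ B, ∃ (X : C) (φ : X ⟶ M), IsSemiSpecialPrecoverIn B T φ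

/-- `Add(V)` relative to `B`: direct summands of coproducts (existing in `B`)
of copies of `V`. -/
def addIn (B : Set C) (V : C) : Set C :=
  {A ∈ B | ∃ (I : Type v) (Q : C) (ι : ∀ _ : I, V ⟶ Q),
     IsCoproductIn B (fun _ : I => V) Q ι ∧ ∃ (s : A ⟶ Q) (r : Q ⟶ A), s ≫ r = 𝟙 A}

/-- `Gen(V)` relative to `B`: quotients of objects of `Add(V)`. -/
def genIn (B : Set C) (V : C) : Set C :=
  {A ∈ B | ∃ X ∈ addIn B V, ∃ p : X ⟶ A, Epi p}

/-- `Pres(V)` relative to `B`: cokernels of morphisms between objects of `Add(V)`. -/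
def presIn (B : Set C) (V : C) : Set C :=
  {A ∈ B | ∃ X ∈ addIn B V, ∃ Y ∈ addIn B V,
     ∃ (f : X ⟶ Y) (c : Y ⟶ A) (hw : f ≫ c = 0), Epi c ∧ (ShortComplex.mk f c hw).Exact}

/-- `Ḡen(V) = Sub(Gen(V))` relative to `B`. -/
def barGenIn (B : Set C) (V : C) : Set C := subIn B (genIn B V)

/-- The class `X` is cogenerating in `B`. -/
def CogeneratingIn (B X : Set C) : Prop := ∀ A ∈ B, ∃ T ∈ X, ∃ f : A ⟶ T, Mono f

/-- The class `X` is generating in `B`. -/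
def GeneratingIn (B X : Set C) : Prop := ∀ A ∈ B, ∃ T ∈ X, ∃ f : T ⟶ A, Epi f

/-- `V` is a quasi-tilting object of (the full subcategory determined by) `B`:
`Gen(V)` is a torsion class and `Gen(V) = Pres(V) = Ḡen(V) ∩ V^{⊥₁}`. -/
def IsQuasiTiltingIn (B : Set C) (V : C) : Prop :=
  V ∈ B ∧ IsTorsionClassIn B (genIn B V) ∧ genIn B V = presIn B V ∧
    genIn B V = barGenIn B V ∩ rightPerp B V

/-- `V` is a tilting object of `B`: quasi-tilting with `Gen(V)` cogenerating. -/
def IsTiltingIn (B : Set C) (V : C) : Prop :=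
  IsQuasiTiltingIn B V ∧ CogeneratingIn B (genIn B V)

/-- `G` is an epi-generator of `B`: every object of `B` is an epimorphic image of a
coproduct (existing in `B`) of copies of `G`. -/
def IsEpiGeneratorIn (B : Set C) (G : C) : Prop :=
  G ∈ B ∧ ∀ A ∈ B, ∃ (I : Type v) (Q : C) (ι : ∀ _ : I, G ⟶ Q),
    IsCoproductIn B (fun _ : I => G) Q ι ∧ ∃ p : Q ⟶ A, Epi p

/-- `0 → A —u→ X → V^{(J)} → 0` is a universal extension of `V` by `A` (relative to `B`):
the right end of the sequence is a nonempty coproduct of copies of `V` existing in `B`,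
and the induced map `Ext¹(V,A) → Ext¹(V,X)` is zero (encoded: for every extension
`0 → A —i→ E → V → 0` with `E ∈ B`, its pushout along `u` splits, i.e. `u` extends
along `i`). -/
def IsUniversalExtensionIn (B : Set C) (V A X : C) (u : A ⟶ X) : Prop :=
  A ∈ B ∧ X ∈ B ∧
  (∃ (J : Type v) (_ : Nonempty J) (P : C) (κ : ∀ _ : J, V ⟶ P) (p : X ⟶ P),
     IsCoproductIn B (fun _ : J => V) P κ ∧ IsShortExact u p) ∧
  (∀ E ∈ B, ∀ (i : A ⟶ E) (q : E ⟶ V), IsShortExact i q → ∃ ψ : E ⟶ X, i ≫ ψ = u)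

/-- `V` is `Ext¹`-universal in `B`: universal extensions of `V` by every object exist. -/
def IsExt1UniversalIn (B : Set C) (V : C) : Prop :=
  ∀ A ∈ B, ∃ (X : C) (u : A ⟶ X), IsUniversalExtensionIn B V A X u

/-- `(X, Y)` is a cotorsion pair in (the full subcategory determined by) `B`. -/
def IsCotorsionPairIn (B X Y : Set C) : Prop :=
  Y = {A ∈ B | ∀ Z ∈ X, Ext1ZeroIn B Z A} ∧
  X = {A ∈ B | ∀ Z ∈ Y, Ext1ZeroIn B A Z}

/-- The pair `(X, Y)` is right complete in `B`: every `A ∈ B` admits a short exact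
sequence `0 → A → Y' → X' → 0` with `Y' ∈ Y`, `X' ∈ X`. -/
def RightCompleteIn (B X Y : Set C) : Prop :=
  ∀ A ∈ B, ∃ (Y' X' : C) (i : A ⟶ Y') (p : Y' ⟶ X'), Y' ∈ Y ∧ X' ∈ X ∧ IsShortExact i p

/-- The pair `(X, Y)` is left complete in `B`: every `A ∈ B` admits a short exact
sequence `0 → Y' → X' → A → 0` with `Y' ∈ Y`, `X' ∈ X`. -/
def LeftCompleteIn (B X Y : Set C) : Prop :=
  ∀ A ∈ B, ∃ (Y' X' : C) (i : Y' ⟶ X') (p : X' ⟶ A), Y' ∈ Y ∧ X' ∈ X ∧ IsShortExact i p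

/-- The full subcategory determined by `B` is reflective in `C`:
the (fully faithful) inclusion functor has a left adjoint. -/
def IsReflectiveSub (B : Set C) : Prop :=
  (ObjectProperty.ι (fun X : C => X ∈ B)).IsRightAdjoint

/-- The full subcategory determined by `B` is coreflective in `C`:
the inclusion functor has a right adjoint. -/
def IsCoreflectiveSub (B : Set C) : Prop :=
  (ObjectProperty.ι (fun X : C => X ∈ B)).IsLeftAdjoint

/-- `Ext²(V, A) = 0` (Yoneda `Ext²`): every `2`-fold extension
`0 → A —g→ X₁ —f→ X₀ —p→ V → 0` represents the trivial class, i.e. (by the standard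
long-exact-sequence criterion) the extension `0 → A → X₁ → im f → 0` extends to an
extension of `X₀` by `A`. -/
def Ext2Zero (V A : C) : Prop :=
  ∀ (X1 X0 : C) (g : A ⟶ X1) (f : X1 ⟶ X0) (p : X0 ⟶ V)
    (w1 : g ≫ f = 0) (w2 : f ≫ p = 0),
    Mono g → Epi p → (ShortComplex.mk g f w1).Exact → (ShortComplex.mk f p w2).Exact →
    ∃ (Y : C) (a : A ⟶ Y) (b : Y ⟶ X0), IsShortExact a b ∧
      ∃ φ : X1 ⟶ Y, g ≫ φ = a ∧ φ ≫ b = f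

/-- `V` has projective dimension at most `1`: `Ext²(V, A) = 0` for every `A`. -/
def ProjDimLE1 (V : C) : Prop := ∀ A : C, Ext2Zero V A

/-- The "elements" of the (possibly large) Yoneda `Ext¹(X, Y)`: short exact sequences
`0 → Y → E → X → 0`. -/
def ExtElem (X Y : C) : Type (max u v) :=
  Σ' (E : C) (i : Y ⟶ E) (p : E ⟶ X), IsShortExact i p

/-- Yoneda equivalence of extensions. -/
def extRel (X Y : C) : ExtElem X Y → ExtElem X Y → Prop :=
  fun e₁ e₂ => ∃ φ : e₁.1 ⟶ e₂.1, e₁.2.1 ≫ φ = e₂.2.1 ∧ φ ≫ e₂.2.2.1 = e₁.2.2.1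

/-- The (possibly large) Yoneda `Ext¹(X, Y)`, as the quotient of the collection
of extensions by Yoneda equivalence. -/
def ExtClass (X Y : C) : Type (max u v) := Quot (extRel X Y)

/-- `Ext¹(A, B)` is a finitely generated (right) `End(A)`-module: there are `n : ℕ` and a
short exact sequence `0 → B → X → A^n → 0` whose connecting map
`Hom(A, A^n) → Ext¹(A, B)` is surjective, i.e. every extension of `A` by `B` is a pullback
of the fixed one along some `h : A ⟶ A^n`. -/
def Ext1FGEnd (A B : C) : Prop :=
  ∃ (n : ℕ) (X : C) (u : B ⟶ X) (p : X ⟶ ⨁ (fun _ : Fin n => A)),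
    IsShortExact u p ∧
    ∀ (E : C) (i : B ⟶ E) (q : E ⟶ A), IsShortExact i q →
      ∃ (h : A ⟶ ⨁ (fun _ : Fin n => A)) (φ : E ⟶ X), i ≫ φ = u ∧ φ ≫ p = q ≫ h

/-- `∐¹_I f = 0`: for every `I`-indexed family of short exact sequences
`0 → Xᵢ → Yᵢ → fᵢ → 0`, the induced morphism `∐ Xᵢ → ∐ Yᵢ` between (existing)
coproducts is a monomorphism. -/
def CoprodDerivedZeroFam {I : Type v} (f : I → C) : Prop :=
  ∀ (X Y : I → C) (u : ∀ i, X i ⟶ Y i) (p : ∀ i, Y i ⟶ f i),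
    (∀ i, IsShortExact (u i) (p i)) →
    ∀ (QX QY : C) (ιX : ∀ i, X i ⟶ QX) (ιY : ∀ i, Y i ⟶ QY) (uu : QX ⟶ QY),
      IsCoproductIn Set.univ X QX ιX → IsCoproductIn Set.univ Y QY ιY →
      (∀ i, ιX i ≫ uu = u i ≫ ιY i) → Mono uu

/-- `∐¹_I V = 0` for the constant family at `V`. -/
def CoprodDerivedZero (I : Type v) (V : C) : Prop :=
  CoprodDerivedZeroFam (fun _ : I => V)

/-- Witness that the category `D` is `Hom`-finite: a commutative ring `R` together with an
`R`-linear structure on `D` for which all `Hom`-modules are finitely generated. -/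
structure HomFiniteStruct (D : Type u) [Category.{v} D] [Preadditive D] :
    Type (max u (v + 1)) where
  R : Type v
  [commRing : CommRing R]
  [linear : CategoryTheory.Linear R D]
  homFinite : ∀ A B : D, Module.Finite R (A ⟶ B)

/-- The category `D` is `Hom`-finite. -/
def HomFinite (D : Type u) [Category.{v} D] [Preadditive D] : Prop :=
  Nonempty (HomFiniteStruct D)

/-- `Q`, with injections `ι`, is a coproduct of the family `f` in an arbitrary category. -/
def IsCoproductCocone {D : Type u} [Category.{v} D] {I : Type w} (f : I → D) (Q : D)
    (ι : ∀ i, f i ⟶ Q) : Prop :=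
  ∀ (Z : D) (g : ∀ i, f i ⟶ Z), ∃! h : Q ⟶ Z, ∀ i, ι i ≫ h = g i

/-- The category `D` satisfies (Ab.4): it has all (small) coproducts, and coproducts
of monomorphisms are monomorphisms (for abelian categories, the latter is equivalent to
the exactness of coproducts). -/
def Ab4Type (D : Type u) [Category.{v} D] : Prop :=
  HasCoproducts.{v} D ∧
  ∀ (I : Type v) (X Y : I → D) (u : ∀ i, X i ⟶ Y i), (∀ i, Mono (u i)) →
    ∀ (QX QY : D) (ιX : ∀ i, X i ⟶ QX) (ιY : ∀ i, Y i ⟶ QY) (uu : QX ⟶ QY),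
      IsCoproductCocone X QX ιX → IsCoproductCocone Y QY ιY →
      (∀ i, ιX i ≫ uu = u i ≫ ιY i) → Mono uu

/-- The category `D` satisfies (Ab.5): it has all (small) coproducts and directed
(filtered) colimits of monomorphisms are monomorphisms (for abelian categories the
latter is equivalent to the exactness of directed colimits). -/
def Ab5Type (D : Type u) [Category.{v} D] : Prop :=
  HasCoproducts.{v} D ∧
  ∀ (J : Type v) [SmallCategory J] [IsFiltered J] (F G : J ⥤ D) (α : F ⟶ G),
    (∀ j, Mono (α.app j)) →
    ∀ (cF : Cocone F) (cG : Cocone G), IsColimit cF → IsColimit cG →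
      ∀ m : cF.pt ⟶ cG.pt, (∀ j, cF.ι.app j ≫ m = α.app j ≫ cG.ι.app j) → Mono m

/-- A ring `S` is left coherent: every finitely generated left ideal is finitely
presented as a left `S`-module. -/
def LeftCoherentRing (S : Type u) [Ring S] : Prop :=
  ∀ J : Submodule S S, J.FG → Module.FinitePresentation S J

/-- A ring `S` is right coherent: every finitely generated right ideal (i.e. finitely
generated left ideal of `Sᵐᵒᵖ`) is finitely presented as a right `S`-module. -/
def RightCoherentRing (S : Type u) [Ring S] : Prop :=
  ∀ J : Submodule Sᵐᵒᵖ Sᵐᵒᵖ, J.FG → Module.FinitePresentation Sᵐᵒᵖ J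

end Paper

/-!
STATEMENT 2 (Corollary `cor.special-preenveloping-hereditary`).
-/

namespace Stmt2

open Paper CategoryTheory CategoryTheory.Limits

variable {C : Type u} [Category.{v} C] [Abelian C]

/-- `𝒯` is a hereditary torsion class: a torsion class closed under subobjects. -/
def HereditaryTorsionClass (T : Set C) : Prop :=
  IsTorsionClassIn Set.univ T ∧
  ∀ ⦃A X : C⦄, X ∈ T → ∀ f : A ⟶ X, Mono f → A ∈ T

/-- `𝒯` is a cohereditary torsion-free class: a torsion-free class closed under
quotients. -/
def CohereditaryTorsionFreeClass (T : Set C) : Prop :=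
  IsTorsionFreeClassIn Set.univ T ∧
  ∀ ⦃X Q : C⦄, X ∈ T → ∀ p : X ⟶ Q, Epi p → Q ∈ T

/-- `𝒯` is a TTF class: simultaneously a torsion class and a torsion-free class. -/
def TTFClass (T : Set C) : Prop :=
  IsTorsionClassIn Set.univ T ∧ IsTorsionFreeClassIn Set.univ T

section Helpers

lemma isShortExact_of {A E B : C} (i : A ⟶ E) (p : E ⟶ B) (w : i ≫ p = 0)
    (h1 : Mono i) (h2 : Epi p) (h3 : (ShortComplex.mk i p w).Exact) :
    IsShortExact i p := ⟨w, ShortComplex.ShortExact.mk' h3 h1 h2⟩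

/-- For a mono `i`, `0 → A → E → coker i → 0` is short exact. -/
lemma ses_of_mono {A E : C} (i : A ⟶ E) [Mono i] :
    IsShortExact i (cokernel.π i) :=
  isShortExact_of _ _ (cokernel.condition i) inferInstance inferInstance
    (ShortComplex.exact_of_g_is_cokernel _ (cokernelIsCokernel i))

/-- For an epi `p`, `0 → ker p → E → B → 0` is short exact. -/
lemma ses_of_epi {E B : C} (p : E ⟶ B) [Epi p] :
    IsShortExact (kernel.ι p) p :=
  isShortExact_of _ _ (kernel.condition p) inferInstance inferInstance
    (ShortComplex.exact_of_f_is_kernel _ (kernelIsKernel p))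

variable {T F : Set C}

/-- Maps from torsion to torsion-free objects vanish. -/
lemma hom_eq_zero_of_tp (hp : IsTorsionPairIn Set.univ T F) {A Y : C}
    (hA : A ∈ T) (hY : Y ∈ F) (f : A ⟶ Y) : f = 0 := by
  rw [hp.eqT] at hA
  exact hA.2 Y hY f

lemma mem_t_of (hp : IsTorsionPairIn Set.univ T F) {A : C}
    (h : ∀ Y ∈ F, ∀ f : A ⟶ Y, f = 0) : A ∈ T := by
  rw [hp.eqT]; exact ⟨Set.mem_univ _, h⟩

lemma mem_f_of (hp : IsTorsionPairIn Set.univ T F) {A : C}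
    (h : ∀ X ∈ T, ∀ f : X ⟶ A, f = 0) : A ∈ F := by
  rw [hp.eqF]; exact ⟨Set.mem_univ _, h⟩

lemma hom_eq_zero_of_tp' (hp : IsTorsionPairIn Set.univ T F) {X A : C}
    (hX : X ∈ T) (hA : A ∈ F) (f : X ⟶ A) : f = 0 := by
  rw [hp.eqF] at hA
  exact hA.2 X hX f

/-- Torsion classes are closed under quotients. -/
lemma t_quot_closed (hp : IsTorsionPairIn Set.univ T F) {X Q : C} (hX : X ∈ T)
    (p : X ⟶ Q) (hep : Epi p) : Q ∈ T := by
  refine mem_t_of hp fun Y hY f => ?_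
  have h0 : p ≫ f = 0 := hom_eq_zero_of_tp hp hX hY _
  exact (cancel_epi p).1 (by simpa using h0)

/-- Torsion-free classes are closed under subobjects. -/
lemma f_sub_closed (hp : IsTorsionPairIn Set.univ T F) {A X : C} (hX : X ∈ F)
    (f : A ⟶ X) (hmf : Mono f) : A ∈ F := by
  refine mem_f_of hp fun Y hY g => ?_
  have h0 : g ≫ f = 0 := hom_eq_zero_of_tp' hp hY hX _
  exact (cancel_mono f).1 (by simpa using h0)

/-- Torsion classes are closed under extensions. -/
lemma t_ext_closed (hp : IsTorsionPairIn Set.univ T F) {T1 E T2 : C}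
    {i : T1 ⟶ E} {p : E ⟶ T2} (h1 : T1 ∈ T) (h2 : T2 ∈ T)
    (hse : IsShortExact i p) : E ∈ T := by
  obtain ⟨w, hse⟩ := hse
  refine mem_t_of hp fun Y hY f => ?_
  have hif : i ≫ f = 0 := hom_eq_zero_of_tp hp h1 hY _
  obtain ⟨d, hd⟩ := CokernelCofork.IsColimit.desc' hse.gIsCokernel f hif
  have hd0 : d = 0 := hom_eq_zero_of_tp hp h2 hY d
  rw [← hd, hd0, comp_zero]

/-- Torsion-free classes are closed under extensions. -/
lemma f_ext_closed (hp : IsTorsionPairIn Set.univ T F) {A1 E A2 : C}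
    {i : A1 ⟶ E} {p : E ⟶ A2} (h1 : A1 ∈ F) (h2 : A2 ∈ F)
    (hse : IsShortExact i p) : E ∈ F := by
  obtain ⟨w, hse⟩ := hse
  refine mem_f_of hp fun X hX f => ?_
  have hfp : f ≫ p = 0 := hom_eq_zero_of_tp' hp hX h2 _
  obtain ⟨l, hl⟩ := KernelFork.IsLimit.lift' hse.fIsKernel f hfp
  have hl0 : l = 0 := hom_eq_zero_of_tp' hp hX h1 l
  rw [← hl, hl0, zero_comp]

lemma ext1ZeroIn_of_isZero_left {Z : C} (hZ : IsZero Z) (X : C) :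
    Ext1ZeroIn Set.univ Z X := by
  intro E _ i p hse
  obtain ⟨w, hse⟩ := hse
  have hp0 : p = 0 := hZ.eq_zero_of_tgt p
  haveI := hse.mono_f
  haveI : Epi i := hse.exact.epi_f hp0
  haveI : IsIso i := isIso_of_mono_of_epi i
  exact ⟨inv i, by simp⟩

lemma ext1ZeroIn_of_isZero_right {Z : C} (hZ : IsZero Z) (X : C) :
    Ext1ZeroIn Set.univ X Z := by
  intro E _ i p _
  exact ⟨0, hZ.eq_of_src _ _⟩

/-- The coimage short exact sequence `0 → ker φ → M → coim φ → 0`. -/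
lemma coimage_ses {M X : C} (φ : M ⟶ X) :
    IsShortExact (kernel.ι φ) (Abelian.coimage.π φ) :=
  ses_of_mono (kernel.ι φ)

/-- Key lemma: for a hereditary torsion class, any `T`-preenvelope has
torsion-free kernel (in the TTF sense). -/
lemma ker_preenvelope (hp : IsTorsionPairIn Set.univ T F)
    (hered : ∀ ⦃A X : C⦄, X ∈ T → ∀ f : A ⟶ X, Mono f → A ∈ T)
    {M X : C} {φ : M ⟶ X} (he : IsPreenvelope T φ)
    {T' : C} (hT' : T' ∈ T) (g : kernel φ ⟶ T') : g = 0 := by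
  set k : kernel φ ⟶ M := kernel.ι φ with hk
  have hQ : Abelian.coimage φ ∈ T :=
    hered he.mem (Abelian.factorThruCoimage φ) inferInstance
  -- pushout of `g` along `k`
  have wq : g ≫ (0 : T' ⟶ Abelian.coimage φ) = k ≫ Abelian.coimage.π φ := by
    simp [hk, cokernel.condition]
  set q' : pushout g k ⟶ Abelian.coimage φ := pushout.desc 0 (Abelian.coimage.π φ) wq
    with hq'
  have hinl : pushout.inl g k ≫ q' = 0 := pushout.inl_desc _ _ _
  have hinr : pushout.inr g k ≫ q' = Abelian.coimage.π φ := pushout.inr_desc _ _ _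
  haveI : Epi q' := epi_of_epi_fac hinr
  -- `q'` is the cokernel of `pushout.inl`
  have hcolim : IsColimit (CokernelCofork.ofπ q' hinl) := by
    refine CokernelCofork.IsColimit.ofπ' q' hinl fun {W} t ht => ?_
    have hkt : k ≫ pushout.inr g k ≫ t = 0 := by
      rw [← pushout.condition_assoc, ht, comp_zero]
    refine ⟨cokernel.desc k (pushout.inr g k ≫ t) hkt, ?_⟩
    apply pushout.hom_ext
    · rw [pushout.inl_desc_assoc]
      simpa using ht.symm
    · rw [pushout.inr_desc_assoc]
      exact cokernel.π_desc k (pushout.inr g k ≫ t) hkt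
  have hse : IsShortExact (pushout.inl g k) q' :=
    isShortExact_of _ _ hinl inferInstance inferInstance
      (ShortComplex.exact_of_g_is_cokernel _ hcolim)
  have hP : pushout g k ∈ T := t_ext_closed hp hT' hQ hse
  obtain ⟨h, hh⟩ := he.fac _ hP (pushout.inr g k)
  have : g ≫ pushout.inl g k = 0 := by
    rw [pushout.condition, ← hh, ← Category.assoc]
    have hk0 : k ≫ φ = 0 := kernel.condition φ
    rw [hk0, zero_comp]
  simpa using (cancel_mono (pushout.inl g k)).1 (by simpa using this)

/-- Dual key lemma: for a cohereditary torsion-free class, any `T`-precover has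
torsion cokernel (in the TTF sense). -/
lemma coker_precover (hp : IsTorsionPairIn Set.univ F T)
    (cohered : ∀ ⦃X Q : C⦄, X ∈ T → ∀ p : X ⟶ Q, Epi p → Q ∈ T)
    {X M : C} {φ : X ⟶ M} (he : IsPrecover T φ)
    {T' : C} (hT' : T' ∈ T) (g : T' ⟶ cokernel φ) : g = 0 := by
  set π : M ⟶ cokernel φ := cokernel.π φ with hπ
  have hI : Abelian.image φ ∈ T :=
    cohered he.mem (Abelian.factorThruImage φ) inferInstance
  -- pullback of `g` along `π`
  have wj : Abelian.image.ι φ ≫ π = (0 : Abelian.image φ ⟶ T') ≫ g := by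
    simp [hπ, kernel.condition]
  set j : Abelian.image φ ⟶ pullback π g := pullback.lift (Abelian.image.ι φ) 0 wj
    with hj
  have hfst : j ≫ pullback.fst π g = Abelian.image.ι φ := pullback.lift_fst _ _ _
  have hsnd : j ≫ pullback.snd π g = 0 := pullback.lift_snd _ _ _
  haveI : Mono j := mono_of_mono_fac hfst
  haveI : Epi (pullback.snd π g) := inferInstance
  -- `j` is the kernel of `pullback.snd`
  have hlim : IsLimit (KernelFork.ofι j hsnd) := by
    refine KernelFork.IsLimit.ofι' j hsnd fun {W} t ht => ?_
    have htk : (t ≫ pullback.fst π g) ≫ π = 0 := by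
      rw [Category.assoc, pullback.condition, ← Category.assoc, ht, zero_comp]
    refine ⟨kernel.lift π (t ≫ pullback.fst π g) htk, ?_⟩
    apply pullback.hom_ext
    · rw [Category.assoc, hfst]
      exact kernel.lift_ι π (t ≫ pullback.fst π g) htk
    · rw [Category.assoc, hsnd, comp_zero, ht]
  have hse : IsShortExact j (pullback.snd π g) :=
    isShortExact_of _ _ hsnd inferInstance inferInstance
      (ShortComplex.exact_of_f_is_kernel _ hlim)
  have hP : pullback π g ∈ T := f_ext_closed hp hI hT' hse
  obtain ⟨h, hh⟩ := he.fac _ hP (pullback.fst π g)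
  have : pullback.snd π g ≫ g = 0 := by
    rw [← pullback.condition, ← hh, Category.assoc]
    have hπ0 : φ ≫ π = 0 := cokernel.condition φ
    rw [hπ0, comp_zero]
  exact (cancel_epi (pullback.snd π g)).1 (by simpa using this)

/-- A hereditary preenveloping torsion class is a TTF class. -/
lemma ttf_of_hered_preenv (hh : HereditaryTorsionClass T)
    (hpe : PreenvelopingIn Set.univ T) : TTFClass T := by
  obtain ⟨⟨F, hp⟩, hered⟩ := hh
  refine ⟨⟨F, hp⟩, ?_⟩
  refine ⟨{A | A ∈ Set.univ ∧ ∀ Y ∈ T, ∀ f : A ⟶ Y, f = 0}, ?_, rfl, ?_⟩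
  · -- eqF : T = {A | ∀ X ∈ S, Hom(X, A) = 0}
    ext A
    constructor
    · rintro hA
      exact ⟨Set.mem_univ _, fun X hX f => hX.2 A hA f⟩
    · rintro ⟨-, hA⟩
      obtain ⟨X0, φ, he⟩ := hpe A (Set.mem_univ _)
      have hker : kernel φ ∈ {A | A ∈ Set.univ ∧ ∀ Y ∈ T, ∀ f : A ⟶ Y, f = 0} :=
        ⟨Set.mem_univ _, fun Y hY g => ker_preenvelope hp hered he hY g⟩
      have hι : kernel.ι φ = 0 := hA (kernel φ) hker (kernel.ι φ)
      haveI : Mono φ := Abelian.mono_of_kernel_ι_eq_zero φ hι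
      exact hered he.mem φ inferInstance
  · -- decomposition sequences
    intro A _
    obtain ⟨X0, φ, he⟩ := hpe A (Set.mem_univ _)
    refine ⟨kernel φ, Abelian.coimage φ, kernel.ι φ, Abelian.coimage.π φ,
      ⟨Set.mem_univ _, fun Y hY g => ker_preenvelope hp hered he hY g⟩,
      hered he.mem (Abelian.factorThruCoimage φ) inferInstance, coimage_ses φ⟩

/-- A cohereditary precovering torsion-free class is a TTF class. -/
lemma ttf_of_cohered_precov (hh : CohereditaryTorsionFreeClass T)
    (hpc : PrecoveringIn Set.univ T) : TTFClass T := by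
  obtain ⟨⟨F, hp⟩, cohered⟩ := hh
  refine ⟨?_, ⟨F, hp⟩⟩
  refine ⟨{A | A ∈ Set.univ ∧ ∀ X ∈ T, ∀ f : X ⟶ A, f = 0}, rfl, ?_, ?_⟩
  · -- eqT : T = {A | ∀ Y ∈ F', Hom(A, Y) = 0}
    ext A
    constructor
    · rintro hA
      exact ⟨Set.mem_univ _, fun Y hY f => hY.2 A hA f⟩
    · rintro ⟨-, hA⟩
      obtain ⟨X0, φ, he⟩ := hpc A (Set.mem_univ _)
      have hcok : cokernel φ ∈ {A | A ∈ Set.univ ∧ ∀ X ∈ T, ∀ f : X ⟶ A, f = 0} :=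
        ⟨Set.mem_univ _, fun X hX g => coker_precover hp cohered he hX g⟩
      have hπ : cokernel.π φ = 0 := hA (cokernel φ) hcok (cokernel.π φ)
      haveI : Epi φ := Abelian.epi_of_cokernel_π_eq_zero φ hπ
      exact cohered he.mem φ inferInstance
  · intro A _
    obtain ⟨X0, φ, he⟩ := hpc A (Set.mem_univ _)
    refine ⟨Abelian.image φ, cokernel φ, Abelian.image.ι φ, cokernel.π φ,
      cohered he.mem (Abelian.factorThruImage φ) inferInstance,
      ⟨Set.mem_univ _, fun X hX g => coker_precover hp cohered he hX g⟩,
      ses_of_epi (cokernel.π φ)⟩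

/-- A TTF class is a hereditary torsion class. -/
lemma hered_of_ttf (h : TTFClass T) : HereditaryTorsionClass T := by
  obtain ⟨ht, ⟨S, hpST⟩⟩ := h
  refine ⟨ht, fun A X hX f hmf => ?_⟩
  exact f_sub_closed hpST hX f hmf

/-- A TTF class is a cohereditary torsion-free class. -/
lemma cohered_of_ttf (h : TTFClass T) : CohereditaryTorsionFreeClass T := by
  obtain ⟨⟨F, hpTF⟩, hf⟩ := h
  refine ⟨hf, fun X Q hX p hep => ?_⟩
  exact t_quot_closed hpTF hX p hep

/-- A TTF class is semi-special preenveloping. -/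
lemma ssPreenv_of_ttf (h : TTFClass T) : SemiSpecialPreenvelopingIn Set.univ T := by
  obtain ⟨-, ⟨S, hpST⟩⟩ := h
  intro M _
  obtain ⟨X0, Y0, i, p, hX0, hY0, hse⟩ := hpST.seq M (Set.mem_univ _)
  obtain ⟨w, hsex⟩ := hse
  haveI := hsex.epi_g
  refine ⟨Y0, p, ⟨hY0, fun T' hT' g => ?_⟩, ?_⟩
  · -- factorization through the cokernel `p`
    have hig : i ≫ g = 0 := hom_eq_zero_of_tp' hpST hX0 hT' _
    obtain ⟨d, hd⟩ := CokernelCofork.IsColimit.desc' hsex.gIsCokernel g hig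
    exact ⟨d, hd⟩
  · -- the cokernel of the epi `p` is zero
    have hz : IsZero (cokernel p) := by
      refine IsZero.of_epi_eq_zero (cokernel.π p) ?_
      exact (cancel_epi p).1 (by simp [cokernel.condition])
    exact ⟨Set.mem_univ _, fun X hX => ext1ZeroIn_of_isZero_left hz X⟩

/-- A TTF class is semi-special precovering. -/
lemma ssPrecov_of_ttf (h : TTFClass T) : SemiSpecialPrecoveringIn Set.univ T := by
  obtain ⟨⟨F, hpTF⟩, -⟩ := h
  intro M _
  obtain ⟨X0, Y0, i, p, hX0, hY0, hse⟩ := hpTF.seq M (Set.mem_univ _)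
  obtain ⟨w, hsex⟩ := hse
  haveI := hsex.mono_f
  refine ⟨X0, i, ⟨hX0, fun T' hT' g => ?_⟩, ?_⟩
  · have hgp : g ≫ p = 0 := hom_eq_zero_of_tp hpTF hT' hY0 _
    obtain ⟨l, hl⟩ := KernelFork.IsLimit.lift' hsex.fIsKernel g hgp
    exact ⟨l, hl⟩
  · have hz : IsZero (kernel i) := by
      refine IsZero.of_mono_eq_zero (kernel.ι i) ?_
      exact (cancel_mono i).1 (by simp [kernel.condition])
    exact ⟨Set.mem_univ _, fun X hX => ext1ZeroIn_of_isZero_right hz X⟩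

end Helpers

theorem statement2 (T : Set C) :
    -- (1) preenveloping ⇔ semi-special preenveloping, for hereditary torsion classes
    ((HereditaryTorsionClass T ∧ PreenvelopingIn Set.univ T) ↔
      (HereditaryTorsionClass T ∧ SemiSpecialPreenvelopingIn Set.univ T)) ∧
    -- (1) ⇔ (2)
    ((HereditaryTorsionClass T ∧ PreenvelopingIn Set.univ T) ↔ TTFClass T) ∧
    -- (2) ⇔ (3)
    (TTFClass T ↔ (CohereditaryTorsionFreeClass T ∧ PrecoveringIn Set.univ T)) ∧
    -- (3) precovering ⇔ semi-special precovering, for cohereditary torsion-free classes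
    ((CohereditaryTorsionFreeClass T ∧ PrecoveringIn Set.univ T) ↔
      (CohereditaryTorsionFreeClass T ∧ SemiSpecialPrecoveringIn Set.univ T)) := by
  have hAB : HereditaryTorsionClass T ∧ PreenvelopingIn Set.univ T → TTFClass T :=
    fun ⟨h1, h2⟩ => ttf_of_hered_preenv h1 h2
  have hBA' : TTFClass T →
      HereditaryTorsionClass T ∧ SemiSpecialPreenvelopingIn Set.univ T :=
    fun h => ⟨hered_of_ttf h, ssPreenv_of_ttf h⟩
  have hCB : CohereditaryTorsionFreeClass T ∧ PrecoveringIn Set.univ T → TTFClass T :=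
    fun ⟨h1, h2⟩ => ttf_of_cohered_precov h1 h2
  have hBC' : TTFClass T →
      CohereditaryTorsionFreeClass T ∧ SemiSpecialPrecoveringIn Set.univ T :=
    fun h => ⟨cohered_of_ttf h, ssPrecov_of_ttf h⟩
  have hdropE : SemiSpecialPreenvelopingIn Set.univ T → PreenvelopingIn Set.univ T :=
    fun h M hM => (h M hM).elim fun X hX => hX.elim fun φ hφ => ⟨X, φ, hφ.1⟩
  have hdropC : SemiSpecialPrecoveringIn Set.univ T → PrecoveringIn Set.univ T :=
    fun h M hM => (h M hM).elim fun X hX => hX.elim fun φ hφ => ⟨X, φ, hφ.1⟩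
  refine ⟨⟨fun h => hBA' (hAB h), fun ⟨h1, h2⟩ => ⟨h1, hdropE h2⟩⟩,
    ⟨hAB, fun h => (hBA' h).imp id hdropE⟩,
    ⟨fun h => ((hBC' h).imp id hdropC), hCB⟩,
    ⟨fun h => hBC' (hCB h), fun ⟨h1, h2⟩ => ⟨h1, hdropC h2⟩⟩⟩

end Stmt2
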